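/- Let G = (V,E) be a finite simple graph with minimum degree at least 1, and let G' be the incidence graph of G with threshold function thr' given by thr'(v) = 1 for every v ∈ V and thr'(e) = 2 for every e ∈ E. Then for every S ⊆ V, act_{G'}(S) = S if and only if S is an independent set in G. -/

import Mathlib

/-- One round of the activation process: a vertex becomes active if at least `thr v`
of its neighbors are active. -/
def actStep {V : Type*} (G : SimpleGraph V) (thr : V → ℕ) (S : Set V) : Set V :=
  S ∪ {v | thr v ≤ (G.neighborSet v ∩ S).ncard}

/-- `actIter G thr i S` is the set of vertices active after `i` rounds starting from `S`. -/
def actIter {V : Type*} (G : SimpleGraph V) (thr : V → ℕ) : ℕ → Set V → Set V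
  | 0, S => S
  | i + 1, S => actStep G thr (actIter G thr i S)

/-- The set of vertices eventually activated by `S`. -/
def act {V : Type*} (G : SimpleGraph V) (thr : V → ℕ) (S : Set V) : Set V :=
  ⋃ i, actIter G thr i S

/-- `S` is a target set if it eventually activates every vertex. -/
def IsTargetSet {V : Type*} (G : SimpleGraph V) (thr : V → ℕ) (S : Set V) : Prop :=
  act G thr S = Set.univ

/-- The incidence graph of `G`: bipartite graph on `V ⊕ E` where a vertex `v` is adjacent to
an edge `e` iff `v` is an endpoint of `e`. -/
def incidenceGraph {V : Type*} (G : SimpleGraph V) : SimpleGraph (V ⊕ G.edgeSet) :=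
  SimpleGraph.fromRel fun x y =>
    ∃ (v : V) (e : G.edgeSet), x = Sum.inl v ∧ y = Sum.inr e ∧ v ∈ (e : Sym2 V)

lemma inc_adj {V : Type*} (G : SimpleGraph V) (x y : V ⊕ G.edgeSet) :
    (incidenceGraph G).Adj x y ↔
      (∃ (v : V) (e : G.edgeSet), x = Sum.inl v ∧ y = Sum.inr e ∧ v ∈ (e : Sym2 V)) ∨
      (∃ (v : V) (e : G.edgeSet), y = Sum.inl v ∧ x = Sum.inr e ∧ v ∈ (e : Sym2 V)) := by
  rw [incidenceGraph, SimpleGraph.fromRel_adj]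
  constructor
  · rintro ⟨_, h⟩; exact h
  · rintro (⟨v, e, rfl, rfl, h⟩ | ⟨v, e, rfl, rfl, h⟩)
    · exact ⟨by simp, Or.inl ⟨v, e, rfl, rfl, h⟩⟩
    · exact ⟨by simp, Or.inr ⟨v, e, rfl, rfl, h⟩⟩

/-- Let `G` have minimum degree at least 1 and consider its incidence graph with
thresholds `1` on the vertex side and `2` on the edge side. For every `S ⊆ V`, the set `S`
(viewed on the vertex side) activates nothing further iff `S` is an independent set of `G`. -/
theorem stmt8 (n : ℕ) (G : SimpleGraph (Fin n))
    (hdeg : ∀ v, 1 ≤ (G.neighborSet v).ncard) (S : Set (Fin n)) :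
    act (incidenceGraph G) (Sum.elim (fun _ => 1) (fun _ => 2)) (Sum.inl '' S) =
        Sum.inl '' S ↔
      S.Pairwise fun u v => ¬ G.Adj u v := by
  constructor
  · -- contrapositive
    intro hact
    by_contra hpair
    rw [Set.Pairwise] at hpair
    push_neg at hpair
    obtain ⟨u, hu, v, hv, hne, hadj⟩ := hpair
    have hadj' : G.Adj u v := hadj
    set e : G.edgeSet := ⟨s(u, v), hadj'⟩ with he
    have hsub : ({Sum.inl u, Sum.inl v} : Set (Fin n ⊕ G.edgeSet)) ⊆
        (incidenceGraph G).neighborSet (Sum.inr e) ∩ (Sum.inl '' S) := by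
      rintro x (rfl | rfl)
      · exact ⟨by rw [SimpleGraph.mem_neighborSet, inc_adj]; right; exact ⟨u, e, rfl, rfl, Sym2.mem_mk_left u v⟩,
          ⟨u, hu, rfl⟩⟩
      · exact ⟨by rw [SimpleGraph.mem_neighborSet, inc_adj]; right; exact ⟨v, e, rfl, rfl, Sym2.mem_mk_right u v⟩,
          ⟨v, hv, rfl⟩⟩
    have h2 : 2 ≤ ((incidenceGraph G).neighborSet (Sum.inr e) ∩ (Sum.inl '' S)).ncard := by
      have := Set.ncard_le_ncard hsub (Set.toFinite _)
      rwa [Set.ncard_pair (by simpa using hne)] at this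
    have hmem : Sum.inr e ∈ act (incidenceGraph G)
        (Sum.elim (fun _ => 1) (fun _ => 2)) (Sum.inl '' S) := by
      refine Set.mem_iUnion.mpr ⟨1, ?_⟩
      show Sum.inr e ∈ actStep _ _ _
      exact Or.inr h2
    rw [hact] at hmem
    obtain ⟨w, _, hw⟩ := hmem
    exact (Sum.inl_ne_inr hw)
  · intro hpair
    have hstep : actStep (incidenceGraph G) (Sum.elim (fun _ => 1) (fun _ => 2))
        (Sum.inl '' S) = Sum.inl '' S := by
      apply Set.union_eq_self_of_subset_right
      rintro (v | e) hx
      · -- vertex side: its neighbors are all inr, so intersection is empty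
        exfalso
        simp only [Set.mem_setOf_eq, Sum.elim_inl] at hx
        have hempty : (incidenceGraph G).neighborSet (Sum.inl v) ∩ (Sum.inl '' S) = ∅ := by
          ext y
          simp only [Set.mem_inter_iff, Set.mem_empty_iff_false, iff_false, not_and]
          rintro hy ⟨w, _, rfl⟩
          rw [SimpleGraph.mem_neighborSet, inc_adj] at hy
          rcases hy with ⟨_, _, _, h, _⟩ | ⟨_, _, _, h, _⟩ <;> exact Sum.inl_ne_inr h
        rw [hempty] at hx
        simp at hx
      · -- edge side: intersection is a subsingleton since S is independent
        exfalso
        simp only [Set.mem_setOf_eq, Sum.elim_inr] at hx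
        have hle : ((incidenceGraph G).neighborSet (Sum.inr e) ∩ (Sum.inl '' S)).ncard ≤ 1 := by
          rw [Set.ncard_le_one (Set.toFinite _)]
          rintro a ⟨ha, w, hw, rfl⟩ b ⟨hb, w', hw', rfl⟩
          rw [SimpleGraph.mem_neighborSet, inc_adj] at ha hb
          have hwmem : w ∈ (e : Sym2 (Fin n)) := by
            rcases ha with ⟨_, _, h1, h2, _⟩ | ⟨_, _, h1, h2, hm⟩
            · exact absurd h2 (by simp)
            · obtain rfl := Sum.inl_injective (h1.symm)
              obtain rfl := Sum.inr_injective h2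
              exact hm
          have hw'mem : w' ∈ (e : Sym2 (Fin n)) := by
            rcases hb with ⟨_, _, h1, h2, _⟩ | ⟨_, _, h1, h2, hm⟩
            · exact absurd h2 (by simp)
            · obtain rfl := Sum.inl_injective (h1.symm)
              obtain rfl := Sum.inr_injective h2
              exact hm
          congr 1
          by_contra hne
          have : (e : Sym2 (Fin n)) = s(w, w') :=
            ((Sym2.mem_and_mem_iff hne).mp ⟨hwmem, hw'mem⟩)
          have hadj : G.Adj w w' := by
            have hp := e.prop
            rw [this] at hp
            exact hp
          exact hpair hw hw' hne hadj
        omega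
    have hiter : ∀ i, actIter (incidenceGraph G) (Sum.elim (fun _ => 1) (fun _ => 2)) i
        (Sum.inl '' S) = Sum.inl '' S := by
      intro i
      induction i with
      | zero => rfl
      | succ k ih => show actStep _ _ _ = _; rw [ih, hstep]
    simp only [act, hiter, Set.iUnion_const]
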